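/- arXiv:1207.4079 — 2 statements merged into one kernel-verified Lean document; each statement's English description precedes it below -/
import Mathlib

section
/- Correctness of the bypassing operation for Node Unique Label Cover (backward direction): let I be a Node Unique Label Cover instance, v a vertex with φ_v ≠ ∅, and I' the instance obtained by bypassing v. If (X, Ψ) is a solution to I with v ∉ X, then (X, Ψ restricted to V(G) \ {v}) is a solution to I'. -/
open scoped Classical

/-- A binary relation `ψ` on an alphabet is a *partial permutation* if every element has
at most one image and at most one preimage. -/
def IsPartialPerm {σ : Type*} (ψ : σ → σ → Prop) : Prop :=
  (∀ a b c : σ, ψ a b → ψ a c → b = c) ∧ (∀ a b c : σ, ψ a c → ψ b c → a = b)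

/-- `(X, Ψ)` is a solution to a Node Unique Label Cover instance: `|X| ≤ k`, the labels
of undeleted vertices satisfy the vertex constraints `φ`, and the labels of each
undeleted edge satisfy its edge constraint `ψ`. -/
def ULCSol {V σ : Type*} (G : SimpleGraph V) (k : ℕ) (φ : V → Set σ)
    (ψ : V → V → σ → σ → Prop) (X : Set V) (Ψ : V → σ) : Prop :=
  X.ncard ≤ k ∧ (∀ v ∉ X, Ψ v ∈ φ v) ∧
  ∀ u ∉ X, ∀ w ∉ X, G.Adj u w → ψ u w (Ψ u) (Ψ w)

/-- The graph obtained from `G` by bypassing the vertex `v`: `v` becomes isolated and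
any two distinct neighbors of `v` become adjacent. -/
def bypassGraph {V : Type*} (G : SimpleGraph V) (v : V) : SimpleGraph V where
  Adj u w := u ≠ v ∧ w ≠ v ∧ u ≠ w ∧ (G.Adj u w ∨ (G.Adj u v ∧ G.Adj v w))
  symm := ⟨by
    rintro u w ⟨h1, h2, h3, h4⟩
    refine ⟨h2, h1, h3.symm, ?_⟩
    rcases h4 with h | ⟨h5, h6⟩
    · exact Or.inl h.symm
    · exact Or.inr ⟨h6.symm, h5.symm⟩⟩
  loopless := ⟨fun u h => h.2.2.1 rfl⟩

/-- The vertex constraints after bypassing `v`: the bypassed vertex gets no constraint,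
each neighbor `u` of `v` keeps only labels having a `ψ u v`-partner in `φ v`, and
other vertices are unchanged. -/
noncomputable def bypassφ {V σ : Type*} (G : SimpleGraph V) (φ : V → Set σ)
    (ψ : V → V → σ → σ → Prop) (v : V) : V → Set σ := fun u =>
  if u = v then Set.univ
  else if G.Adj u v then φ u ∩ {β | ∃ α ∈ φ v, ψ u v β α}
  else φ u

/-- The edge constraints after bypassing `v`: old constraints are kept, and for each
pair of neighbors of `v` the constraint is additionally intersected with the
composition of the two constraints through `v`. -/
def bypassψ {V σ : Type*} (G : SimpleGraph V) (ψ : V → V → σ → σ → Prop) (v : V) :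
    V → V → σ → σ → Prop := fun u w a c =>
  (G.Adj u w → ψ u w a c) ∧
  ((G.Adj u v ∧ G.Adj v w) → ∃ b : σ, ψ u v a b ∧ ψ v w b c)

/-- Correctness of bypassing (backward direction): if `(X, Ψ)` is a solution of the
original instance avoiding `v`, then `(X, Ψ)` (restricted to the remaining vertices,
here left intact since `v` is unconstrained after bypassing) is a solution of the
bypassed instance. -/
theorem bypass_backward {V σ : Type*} [Fintype V] [DecidableEq V]
    (G : SimpleGraph V) (k : ℕ) (φ : V → Set σ) (ψ : V → V → σ → σ → Prop)
    (hsymm : ∀ u w a b, ψ u w a b ↔ ψ w u b a)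
    (hpp : ∀ u w, G.Adj u w → IsPartialPerm (ψ u w))
    (v : V) (hφv : (φ v).Nonempty)
    (X : Set V) (Ψ : V → σ) (hvX : v ∉ X)
    (hsol : ULCSol G k φ ψ X Ψ) :
    ULCSol (bypassGraph G v) k (bypassφ G φ ψ v) (bypassψ G ψ v) X Ψ := by
  obtain ⟨hk, hφ, hψe⟩ := hsol
  refine ⟨hk, ?_, ?_⟩
  · intro u huX
    unfold bypassφ
    split_ifs with h1 h2
    · trivial
    · exact ⟨hφ u huX, Ψ v, hφ v hvX, hψe u huX v hvX h2⟩
    · exact hφ u huX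
  · intro u huX w hwX hadj
    obtain ⟨-, -, -, -⟩ := hadj
    constructor
    · intro h; exact hψe u huX w hwX h
    · rintro ⟨h1, h2⟩
      exact ⟨Ψ v, hψe u huX v hvX h1, hψe v hvX w hwX h2⟩
end

section
/- Identification of well-connected equivalent terminals preserves the solution set: let (G, T, R, k) be a Node Multiway Cut-Uncut instance and u, v ∈ T two distinct terminals with (u,v) ∈ R such that either uv ∈ E(G) or |N_G(u) ∩ N_G(v)| > k. Let I' be the instance obtained by identifying u and v (replacing them by a single terminal w adjacent to N_G(u) ∪ N_G(v) and updating R accordingly). Then the sets of solutions of I and I' are equal. -/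
variable {V : Type*}

/-- The graph `G` with the vertex set `X` (effectively) removed: only edges with both
endpoints outside `X` are kept, so the vertices of `X` become isolated. -/
def delV (G : SimpleGraph V) (X : Set V) : SimpleGraph V where
  Adj u w := G.Adj u w ∧ u ∉ X ∧ w ∉ X
  symm := ⟨by rintro u w ⟨h, hu, hw⟩; exact ⟨h.symm, hw, hu⟩⟩
  loopless := ⟨by rintro u ⟨h, -, -⟩; exact G.loopless.irrefl u h⟩

/-- `X` is a solution to the Node Multiway Cut-Uncut instance `(G, T, R, k)`:
`X` is a set of at most `k` nonterminal vertices and two terminals lie in the same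
connected component of `G \ X` exactly when they are `R`-equivalent. -/
def NMWCUSol (G : SimpleGraph V) (T : Set V) (R : V → V → Prop) (k : ℕ)
    (X : Set V) : Prop :=
  X ⊆ Tᶜ ∧ X.ncard ≤ k ∧ ∀ u ∈ T, ∀ v ∈ T, ((delV G X).Reachable u v ↔ R u v)

/-- The graph obtained from `G` by identifying the terminal `v` with the terminal `u`:
`v` becomes isolated and `u` additionally receives all remaining neighbors of `v`. -/
def identGraph (G : SimpleGraph V) (u v : V) : SimpleGraph V where
  Adj a b := a ≠ v ∧ b ≠ v ∧ a ≠ b ∧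
    (G.Adj a b ∨ (a = u ∧ G.Adj v b) ∨ (b = u ∧ G.Adj a v))
  symm := ⟨by
    rintro a b ⟨h1, h2, h3, h4⟩
    refine ⟨h2, h1, h3.symm, ?_⟩
    rcases h4 with h | ⟨h5, h6⟩ | ⟨h5, h6⟩
    · exact Or.inl h.symm
    · exact Or.inr (Or.inr ⟨h5, h6.symm⟩)
    · exact Or.inr (Or.inl ⟨h5, h6.symm⟩)⟩
  loopless := ⟨fun a h => h.2.2.1 rfl⟩

open scoped Classical

open SimpleGraph

private lemma ident_step {G : SimpleGraph V} {u v : V} {X : Set V} (hue : u ≠ v)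
    (huX : u ∉ X) {a b : V} (h : (delV G X).Adj a b) :
    (delV (identGraph G u v) X).Reachable (if a = v then u else a) (if b = v then u else b) := by
  obtain ⟨hab, haX, hbX⟩ := h
  split_ifs with ha hb hb
  · exact Reachable.refl _
  · subst ha
    by_cases hbu : b = u
    · subst hbu; exact Reachable.refl _
    · exact Adj.reachable ⟨⟨hue, hb, fun h => hbu h.symm, Or.inr (Or.inl ⟨rfl, hab⟩)⟩, huX, hbX⟩
  · subst hb
    by_cases hau : a = u
    · subst hau; exact Reachable.refl _
    · exact Adj.reachable ⟨⟨ha, hue, hau, Or.inr (Or.inr ⟨rfl, hab⟩)⟩, haX, huX⟩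
  · exact Adj.reachable ⟨⟨ha, hb, hab.ne, Or.inl hab⟩, haX, hbX⟩

private lemma ident_reach {G : SimpleGraph V} {u v : V} {X : Set V} (hue : u ≠ v)
    (huX : u ∉ X) {a b : V} (h : (delV G X).Reachable a b) :
    (delV (identGraph G u v) X).Reachable (if a = v then u else a) (if b = v then u else b) := by
  obtain ⟨w⟩ := h
  induction w with
  | nil => exact Reachable.refl _
  | cons h p ih => exact (ident_step hue huX h).trans ih

private lemma unident_reach {G : SimpleGraph V} {u v : V} {X : Set V} (hvX : v ∉ X)
    (hreach : (delV G X).Reachable u v) {a b : V}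
    (h : (delV (identGraph G u v) X).Reachable a b) : (delV G X).Reachable a b := by
  obtain ⟨w⟩ := h
  induction w with
  | nil => exact Reachable.refl _
  | cons h p ih =>
    refine Reachable.trans ?_ ih
    obtain ⟨⟨ha, hb, hne, hc⟩, haX, hbX⟩ := h
    rcases hc with hadj | ⟨rfl, hvb⟩ | ⟨rfl, hav⟩
    · exact Adj.reachable (G := delV G X) ⟨hadj, haX, hbX⟩
    · exact hreach.trans (Adj.reachable (G := delV G X) ⟨hvb, hvX, hbX⟩)
    · exact (Adj.reachable (G := delV G X) ⟨hav, haX, hvX⟩).trans hreach.symm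

private lemma reach_uv [Fintype V] {G : SimpleGraph V} {u v : V} {X : Set V} {k : ℕ}
    (huX : u ∉ X) (hvX : v ∉ X) (hXk : X.ncard ≤ k)
    (hcon : G.Adj u v ∨ k < (G.neighborSet u ∩ G.neighborSet v).ncard) :
    (delV G X).Reachable u v := by
  rcases hcon with h | h
  · exact Adj.reachable ⟨h, huX, hvX⟩
  · have hns : ¬ (G.neighborSet u ∩ G.neighborSet v ⊆ X) := by
      intro hsub
      exact absurd (le_trans (Set.ncard_le_ncard hsub X.toFinite) hXk) (not_le.2 h)
    obtain ⟨w, hw, hwX⟩ := Set.not_subset.1 hns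
    exact (Adj.reachable (show (delV G X).Adj u w from ⟨hw.1, huX, hwX⟩)).trans
      (Adj.reachable (show (delV G X).Adj w v from ⟨hw.2.symm, hwX, hvX⟩))

/-- Identification of well-connected `R`-equivalent terminals preserves the solution
set: if terminals `u ≠ v` satisfy `(u,v) ∈ R` and are adjacent or have more than `k`
common neighbors, then the solutions of the original instance are exactly the solutions
of the instance obtained by identifying `u` and `v` (the identified instance lives on
the vertex set without `v`, i.e. its solutions avoid `v`). -/
theorem identification_preserves_solutions [Fintype V] (G : SimpleGraph V)
    (T : Set V) (R : V → V → Prop) (k : ℕ)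
    (hrefl : ∀ t ∈ T, R t t)
    (hsym : ∀ s ∈ T, ∀ t ∈ T, R s t → R t s)
    (htrans : ∀ s ∈ T, ∀ t ∈ T, ∀ r ∈ T, R s t → R t r → R s r)
    (u v : V) (hu : u ∈ T) (hv : v ∈ T) (huv : u ≠ v) (hR : R u v)
    (hcon : G.Adj u v ∨ k < (G.neighborSet u ∩ G.neighborSet v).ncard) :
    ∀ X : Set V, NMWCUSol G T R k X ↔
      (v ∉ X ∧ NMWCUSol (identGraph G u v) (T \ {v}) R k X) := by
  intro X
  constructor
  · rintro ⟨hXT, hXk, hsol⟩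
    have huX : u ∉ X := fun h => hXT h hu
    have hvX : v ∉ X := fun h => hXT h hv
    have hreach : (delV G X).Reachable u v := (hsol u hu v hv).2 hR
    refine ⟨hvX, fun x hx hxT => hXT hx hxT.1, hXk, ?_⟩
    intro a ha b hb
    have ha2 : a ≠ v := fun h => ha.2 h
    have hb2 : b ≠ v := fun h => hb.2 h
    constructor
    · intro hr
      exact (hsol a ha.1 b hb.1).1 (unident_reach hvX hreach hr)
    · intro hrab
      have h2 := ident_reach huv huX ((hsol a ha.1 b hb.1).2 hrab)
      simpa [ha2, hb2] using h2
  · rintro ⟨hvX, hXT', hXk, hsol⟩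
    have hXT : X ⊆ Tᶜ := by
      intro x hx hxT
      exact hXT' hx ⟨hxT, fun hxv => hvX (hxv ▸ hx)⟩
    have huX : u ∉ X := fun h => hXT h hu
    have hreach := reach_uv huX hvX hXk hcon
    have conn : ∀ c : V, (delV G X).Reachable c (if c = v then u else c) := by
      intro c; split_ifs with h
      · subst h; exact hreach.symm
      · exact Reachable.refl c
    have fa : ∀ c ∈ T, (if c = v then u else c) ∈ T \ {v} ∧ R c (if c = v then u else c) := by
      intro c hc
      split_ifs with h
      · refine ⟨⟨hu, fun hh => huv hh⟩, ?_⟩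
        subst h; exact hsym u hu c hc hR
      · exact ⟨⟨hc, h⟩, hrefl c hc⟩
    refine ⟨hXT, hXk, ?_⟩
    intro a ha b hb
    obtain ⟨haT, hRa⟩ := fa a ha
    obtain ⟨hbT, hRb⟩ := fa b hb
    have hiff := hsol _ haT _ hbT
    constructor
    · intro hr
      have h2 := hiff.1 (ident_reach huv huX hr)
      exact htrans a ha _ haT.1 b hb hRa
        (htrans _ haT.1 _ hbT.1 b hb h2 (hsym b hb _ hbT.1 hRb))
    · intro hrab
      have h2 : R (if a = v then u else a) (if b = v then u else b) :=
        htrans _ haT.1 a ha _ hbT.1 (hsym a ha _ haT.1 hRa)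
          (htrans a ha b hb _ hbT.1 hrab hRb)
      have h3 := unident_reach hvX hreach (hiff.2 h2)
      exact ((conn a).trans h3).trans (conn b).symm
end
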